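/- For real parameters γ > 0, λ > 0 and a C¹ function ε : [a,b] → ℝ, the function u(t) = (1/(γλ))·sin(γλt)·exp( (1/(8γ²))·∫ₐᵗ ε(s)sin²(γλs) ds ) solves the equation u''(t) + λ²c(t)u(t) = 0 on [a,b], where c(t) = γ² − (ε(t)/(4γλ))sin(2γλt) − (ε'(t)/(8γ²λ²))sin²(γλt) − (ε(t)²/(64γ⁴λ²))sin⁴(γλt). -/

import Mathlib

open Set MeasureTheory intervalIntegral

theorem stmt10 (γ lam a b : ℝ) (hγ : 0 < γ) (hlam : 0 < lam) (ha : 0 ≤ a)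
    (hab : a < b) (ε ε' : ℝ → ℝ)
    (hεc : ContinuousOn ε (Set.Icc a b))
    (hε : ∀ t ∈ Set.Icc a b, HasDerivWithinAt ε (ε' t) (Set.Icc a b) t)
    (hε'c : ContinuousOn ε' (Set.Icc a b))
    (u c : ℝ → ℝ)
    (hu : ∀ t, u t = 1 / (γ * lam) * Real.sin (γ * lam * t) *
      Real.exp (1 / (8 * γ ^ 2) * ∫ s in a..t, ε s * (Real.sin (γ * lam * s)) ^ 2))
    (hc : ∀ t, c t = γ ^ 2 - ε t / (4 * γ * lam) * Real.sin (2 * γ * lam * t) -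
      ε' t / (8 * γ ^ 2 * lam ^ 2) * (Real.sin (γ * lam * t)) ^ 2 -
      (ε t) ^ 2 / (64 * γ ^ 4 * lam ^ 2) * (Real.sin (γ * lam * t)) ^ 4) :
    ∃ u' : ℝ → ℝ,
      (∀ t ∈ Set.Icc a b, HasDerivWithinAt u (u' t) (Set.Icc a b) t) ∧
      (∀ t ∈ Set.Icc a b,
        HasDerivWithinAt u' (-(lam ^ 2 * c t * u t)) (Set.Icc a b) t) := by
  set k := γ * lam with hk
  have hkne : k ≠ 0 := by positivity
  set f : ℝ → ℝ := fun s => ε s * (Real.sin (k * s)) ^ 2 with hf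
  have hfc : ContinuousOn f (Set.Icc a b) := by
    exact hεc.mul (((Real.continuous_sin.comp (continuous_const.mul continuous_id)).pow 2).continuousOn)
  set g : ℝ → ℝ := fun t => ∫ s in a..t, f s with hg
  have hgd : ∀ t ∈ Set.Icc a b, HasDerivWithinAt g (f t) (Set.Icc a b) t := by
    intro t ht
    haveI : Fact (t ∈ Set.Icc a b) := ⟨ht⟩
    apply intervalIntegral.integral_hasDerivWithinAt_right
    · apply ContinuousOn.intervalIntegrable
      apply hfc.mono
      rw [Set.uIcc_of_le ht.1]
      exact Set.Icc_subset_Icc le_rfl ht.2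
    · exact hfc.stronglyMeasurableAtFilter_nhdsWithin measurableSet_Icc t
    · exact hfc t ht
  set E : ℝ → ℝ := fun t => Real.exp (1 / (8 * γ ^ 2) * g t) with hE
  have hEd : ∀ t ∈ Set.Icc a b, HasDerivWithinAt E
      (Real.exp (1 / (8 * γ ^ 2) * g t) * (1 / (8 * γ ^ 2) * f t)) (Set.Icc a b) t := by
    intro t ht
    exact ((hgd t ht).const_mul (1 / (8 * γ ^ 2))).exp
  have hsin : ∀ t : ℝ, HasDerivAt (fun s => Real.sin (k * s)) (Real.cos (k * t) * k) t := by
    intro t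
    simpa using ((hasDerivAt_id t).const_mul k).sin
  set u' : ℝ → ℝ := fun t => 1 / k *
      (Real.cos (k * t) * k * E t +
        Real.sin (k * t) * (E t * (1 / (8 * γ ^ 2) * f t))) with hu'
  have hud : ∀ t ∈ Set.Icc a b, HasDerivWithinAt u (u' t) (Set.Icc a b) t := by
    intro t ht
    have h1 : HasDerivWithinAt (fun t => 1 / k * (Real.sin (k * t) * E t)) (u' t)
        (Set.Icc a b) t := by
      have := (((hsin t).hasDerivWithinAt.mul (hEd t ht))).const_mul (1 / k)
      exact this.congr_deriv (by ring)
    exact h1.congr (fun y _ => by rw [hu y]; simp only [hE, hg]; ring_nf)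
      (by rw [hu t]; simp only [hE, hg]; ring_nf)
  refine ⟨u', hud, fun t ht => ?_⟩
  -- differentiate u'
  have hfd : HasDerivWithinAt f
      (ε' t * Real.sin (k * t) ^ 2 + ε t * (2 * Real.sin (k * t) * (Real.cos (k * t) * k)))
      (Set.Icc a b) t := by
    have hs2 : HasDerivWithinAt (fun s => (Real.sin (k * s)) ^ 2)
        (2 * Real.sin (k * t) ^ 1 * (Real.cos (k * t) * k)) (Set.Icc a b) t :=
      (hsin t).hasDerivWithinAt.pow 2
    have := (hε t ht).mul hs2
    exact this.congr_deriv (by ring)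
  have hcos : HasDerivWithinAt (fun s => Real.cos (k * s)) (-Real.sin (k * t) * k)
      (Set.Icc a b) t := by
    simpa using ((hasDerivAt_id t).const_mul k).hasDerivWithinAt.cos
  have h2 : HasDerivWithinAt u'
      (1 / k * ((-Real.sin (k * t) * k * k * E t +
          Real.cos (k * t) * k * (E t * (1 / (8 * γ ^ 2) * f t))) +
        (Real.cos (k * t) * k * (E t * (1 / (8 * γ ^ 2) * f t)) +
          Real.sin (k * t) * ((E t * (1 / (8 * γ ^ 2) * f t)) * (1 / (8 * γ ^ 2) * f t) +
            E t * (1 / (8 * γ ^ 2) *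
              (ε' t * Real.sin (k * t) ^ 2 + ε t * (2 * Real.sin (k * t) * (Real.cos (k * t) * k))))))))
      (Set.Icc a b) t := by
    have hA : HasDerivWithinAt (fun s => Real.cos (k * s) * k * E s)
        (-Real.sin (k * t) * k * k * E t + Real.cos (k * t) * k * (E t * (1 / (8 * γ ^ 2) * f t)))
        (Set.Icc a b) t := by
      have := (hcos.mul_const k).mul (hEd t ht)
      exact this.congr_deriv (by ring)
    have hB : HasDerivWithinAt (fun s => Real.sin (k * s) * (E s * (1 / (8 * γ ^ 2) * f s)))
        (Real.cos (k * t) * k * (E t * (1 / (8 * γ ^ 2) * f t)) +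
          Real.sin (k * t) * ((E t * (1 / (8 * γ ^ 2) * f t)) * (1 / (8 * γ ^ 2) * f t) +
            E t * (1 / (8 * γ ^ 2) *
              (ε' t * Real.sin (k * t) ^ 2 + ε t * (2 * Real.sin (k * t) * (Real.cos (k * t) * k))))))
        (Set.Icc a b) t := by
      have := (hsin t).hasDerivWithinAt.mul ((hEd t ht).mul (hfd.const_mul (1 / (8 * γ ^ 2))))
      exact this.congr_deriv (by simp only [Pi.mul_apply, hE])
    exact (hA.add hB).const_mul (1 / k)
  convert h2 using 1
  rw [hc t, hu t, hf]
  have h2s : Real.sin (2 * γ * lam * t) = 2 * Real.sin (k * t) * Real.cos (k * t) := by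
    rw [show 2 * γ * lam * t = 2 * (k * t) by rw [hk]; ring, Real.sin_two_mul]
  rw [h2s, hk]
  have hEeq : Real.exp (1 / (8 * γ ^ 2) * ∫ s in a..t, ε s * Real.sin (γ * lam * s) ^ 2) = E t := by
    rw [hE, hg, hf, hk]
  rw [hEeq]
  field_simp
  ring
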